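/- In a uniformly convex Banach space, an affine isometric action of a topological group has a global fixed point if and only if some (equivalently, every) orbit is bounded. -/

import Mathlib

set_option linter.unusedSectionVars false

open Bornology Metric

section Center

variable {B : Type} [NormedAddCommGroup B] [NormedSpace ℝ B]

/-- The radius of `S` as seen from `x`. -/
noncomputable def rad (S : Set B) (x : B) : ℝ := ⨆ s : S, dist x s

/-- The Chebyshev radius of `S`. -/
noncomputable def radInf (S : Set B) : ℝ := ⨅ x : B, rad S x

theorem rad_bddAbove {S : Set B} (hb : IsBounded S) (x : B) :
    BddAbove (Set.range fun s : S => dist x s) := by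
  obtain ⟨r, hr⟩ := hb.subset_closedBall x
  refine ⟨r, ?_⟩
  rintro _ ⟨s, rfl⟩
  have := hr s.2
  simpa [dist_comm] using this

theorem dist_le_rad {S : Set B} (hb : IsBounded S) {x s : B} (hs : s ∈ S) :
    dist x s ≤ rad S x :=
  le_ciSup (rad_bddAbove hb x) ⟨s, hs⟩

theorem rad_le {S : Set B} (hne : S.Nonempty) {x : B} {R : ℝ}
    (h : ∀ s ∈ S, dist x s ≤ R) : rad S x ≤ R := by
  have : Nonempty S := hne.to_subtype
  exact ciSup_le fun s => h s s.2

theorem rad_nonneg {S : Set B} (hne : S.Nonempty) (hb : IsBounded S) (x : B) :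
    0 ≤ rad S x := by
  obtain ⟨s, hs⟩ := hne
  exact dist_nonneg.trans (dist_le_rad hb hs)

theorem rad_le_add {S : Set B} (hne : S.Nonempty) (hb : IsBounded S) (x y : B) :
    rad S x ≤ rad S y + dist x y := by
  refine rad_le hne fun s hs => ?_
  calc dist x s ≤ dist x y + dist y s := dist_triangle _ _ _
    _ ≤ dist x y + rad S y := by have := dist_le_rad hb (x := y) hs; linarith
    _ = rad S y + dist x y := by ring

theorem radInf_le {S : Set B} (hne : S.Nonempty) (hb : IsBounded S) (x : B) :
    radInf S ≤ rad S x :=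
  ciInf_le ⟨0, by rintro _ ⟨y, rfl⟩; exact rad_nonneg hne hb y⟩ x

theorem radInf_nonneg {S : Set B} (hne : S.Nonempty) (hb : IsBounded S) :
    0 ≤ radInf S :=
  le_ciInf fun x => rad_nonneg hne hb x

/-- Core uniform convexity estimate: near-minimizers of `rad S` are close. -/
theorem core_estimate {B : Type} [NormedAddCommGroup B] [NormedSpace ℝ B]
    [UniformConvexSpace B] {S : Set B} (hne : S.Nonempty) (hb : IsBounded S)
    {ε : ℝ} (hε : 0 < ε) :
    ∃ δ > 0, ∀ x y : B, rad S x ≤ radInf S + δ → rad S y ≤ radInf S + δ →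
      dist x y ≤ ε := by
  set r0 := radInf S with hr0
  have hr0nn : 0 ≤ r0 := radInf_nonneg hne hb
  rcases eq_or_lt_of_le hr0nn with h0 | h0
  · -- r0 = 0
    refine ⟨ε / 2, half_pos hε, fun x y hx hy => ?_⟩
    obtain ⟨s, hs⟩ := hne
    calc dist x y ≤ dist x s + dist y s := dist_triangle_right _ _ _
      _ ≤ rad S x + rad S y := add_le_add (dist_le_rad hb hs) (dist_le_rad hb hs)
      _ ≤ (r0 + ε / 2) + (r0 + ε / 2) := add_le_add hx hy
      _ = ε := by rw [← h0]; ring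
  · -- r0 > 0
    have hε0 : 0 < ε / (r0 + 1) := div_pos hε (by linarith)
    obtain ⟨δ₀, hδ₀, hconv⟩ := exists_forall_closed_ball_dist_add_le_two_sub B hε0
    refine ⟨min 1 (r0 * δ₀ / 4), lt_min one_pos (by positivity), fun x y hx hy => ?_⟩
    by_contra hxy
    push_neg at hxy
    set δ := min 1 (r0 * δ₀ / 4) with hδdef
    have hδ1 : δ ≤ 1 := min_le_left _ _
    have hδ2 : δ ≤ r0 * δ₀ / 4 := min_le_right _ _
    have hδpos : 0 < δ := lt_min one_pos (by positivity)
    set R := r0 + δ with hRdef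
    have hRpos : 0 < R := by positivity
    -- the midpoint has radius < r0, contradiction
    have key : rad S ((1/2 : ℝ) • (x + y)) ≤ R * (1 - δ₀ / 2) := by
      refine rad_le hne fun s hs => ?_
      have hxs : ‖x - s‖ ≤ R := by
        have := dist_le_rad hb (x := x) hs; rw [dist_eq_norm] at this; linarith
      have hys : ‖y - s‖ ≤ R := by
        have := dist_le_rad hb (x := y) hs; rw [dist_eq_norm] at this; linarith
      have ha : ‖R⁻¹ • (x - s)‖ ≤ 1 := by
        rw [norm_smul, norm_inv, Real.norm_eq_abs, abs_of_pos hRpos,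
          inv_mul_le_iff₀ hRpos, mul_one]
        exact hxs
      have hbn : ‖R⁻¹ • (y - s)‖ ≤ 1 := by
        rw [norm_smul, norm_inv, Real.norm_eq_abs, abs_of_pos hRpos,
          inv_mul_le_iff₀ hRpos, mul_one]
        exact hys
      have hab : ε / (r0 + 1) ≤ ‖R⁻¹ • (x - s) - R⁻¹ • (y - s)‖ := by
        rw [← smul_sub, norm_smul, norm_inv, Real.norm_eq_abs, abs_of_pos hRpos]
        have h1 : x - s - (y - s) = x - y := by abel
        rw [h1]
        have h2 : ε ≤ ‖x - y‖ := by rw [← dist_eq_norm]; linarith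
        have h3 : R ≤ r0 + 1 := by linarith
        rw [le_inv_mul_iff₀ hRpos]
        calc R * (ε / (r0 + 1)) ≤ (r0 + 1) * (ε / (r0 + 1)) := by
              apply mul_le_mul_of_nonneg_right h3 (by positivity)
          _ = ε := by field_simp
          _ ≤ ‖x - y‖ := h2
      have := hconv ha hbn hab
      rw [← smul_add, norm_smul, norm_inv, Real.norm_eq_abs, abs_of_pos hRpos,
        inv_mul_le_iff₀ hRpos] at this
      have h4 : x - s + (y - s) = x + y - (2 : ℝ) • s := by
        rw [two_smul]; abel
      rw [h4] at this
      have h5 : (1/2 : ℝ) • (x + y) - s = (1/2 : ℝ) • (x + y - (2:ℝ) • s) := by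
        rw [smul_sub, smul_smul]; norm_num
      rw [dist_eq_norm, h5, norm_smul, Real.norm_eq_abs]
      rw [abs_of_pos (by norm_num : (0:ℝ) < 1/2)]
      nlinarith [this]
    have hge : r0 ≤ rad S ((1/2 : ℝ) • (x + y)) := radInf_le hne hb _
    have hlt : R * (1 - δ₀ / 2) < r0 := by nlinarith
    linarith

/-- Existence and uniqueness of the Chebyshev center of a nonempty bounded set
in a uniformly convex Banach space. -/
theorem exists_center {B : Type} [NormedAddCommGroup B] [NormedSpace ℝ B]
    [UniformConvexSpace B] [CompleteSpace B] {S : Set B} (hne : S.Nonempty)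
    (hb : IsBounded S) :
    ∃ c : B, rad S c ≤ radInf S ∧ ∀ x : B, rad S x ≤ radInf S → x = c := by
  -- minimizing sequence
  have hseq : ∀ n : ℕ, ∃ x : B, rad S x < radInf S + 1 / (n + 1) := by
    intro n
    have h : radInf S < radInf S + 1 / (n + 1) := by
      have : (0:ℝ) < 1 / (n + 1) := by positivity
      linarith
    exact exists_lt_of_ciInf_lt h
  choose u hu using hseq
  have hcauchy : CauchySeq u := by
    rw [Metric.cauchySeq_iff]
    intro ε hε
    obtain ⟨δ, hδ, hcore⟩ := core_estimate hne hb (half_pos hε)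
    obtain ⟨N, hN⟩ := exists_nat_one_div_lt hδ
    refine ⟨N, fun m hm n hn => ?_⟩
    have h1 : ∀ k : ℕ, N ≤ k → rad S (u k) ≤ radInf S + δ := by
      intro k hk
      have : (1 : ℝ) / (k + 1) ≤ 1 / (N + 1) := by
        apply one_div_le_one_div_of_le (by positivity)
        exact_mod_cast by omega
      have := (hu k).le.trans (by linarith [hN.le] : radInf S + 1 / (k+1) ≤ radInf S + δ)
      exact this
    have := hcore (u m) (u n) (h1 m hm) (h1 n hn)
    linarith
  obtain ⟨c, hc⟩ := cauchySeq_tendsto_of_complete hcauchy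
  have hcle : rad S c ≤ radInf S := by
    refine le_of_forall_pos_le_add fun η hη => ?_
    obtain ⟨N₁, hN₁⟩ := (Metric.tendsto_atTop.mp hc) (η / 2) (half_pos hη)
    obtain ⟨N₂, hN₂⟩ := exists_nat_one_div_lt (half_pos hη)
    set n := max N₁ N₂
    have h1 : dist (u n) c < η / 2 := hN₁ n (le_max_left _ _)
    have h2 : (1 : ℝ) / (n + 1) < η / 2 := by
      have : (1 : ℝ) / (n + 1) ≤ 1 / (N₂ + 1) := by
        apply one_div_le_one_div_of_le (by positivity)
        exact_mod_cast by omega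
      linarith
    calc rad S c ≤ rad S (u n) + dist c (u n) := rad_le_add hne hb _ _
      _ ≤ (radInf S + 1 / (n + 1)) + dist c (u n) := by linarith [(hu n).le]
      _ ≤ radInf S + η := by rw [dist_comm]; linarith
  refine ⟨c, hcle, fun x hx => ?_⟩
  have : ∀ ε > 0, dist x c ≤ ε := by
    intro ε hε
    obtain ⟨δ, hδ, hcore⟩ := core_estimate hne hb hε
    exact hcore x c (hx.trans (by linarith)) (hcle.trans (by linarith))
  have hd : dist x c ≤ 0 := le_of_forall_pos_le_add (by simpa using fun ε hε => this ε hε)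
  exact dist_le_zero.mp hd

end Center

theorem affine_isometric_action_fixed_point_iff_bounded_orbit
    (G : Type) [Group G] [TopologicalSpace G] [IsTopologicalGroup G]
    (B : Type) [NormedAddCommGroup B] [NormedSpace ℝ B] [UniformConvexSpace B]
    [CompleteSpace B]
    (α : G → (B ≃ᵃⁱ[ℝ] B))
    (hmul : ∀ g h : G, α (g * h) = (α h).trans (α g))
    (hcont : Continuous fun q : G × B => α q.1 q.2) :
    ((∃ x : B, ∀ g : G, α g x = x) ↔
        ∃ x : B, Bornology.IsBounded (Set.range fun g : G => α g x)) ∧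
    ((∃ x : B, Bornology.IsBounded (Set.range fun g : G => α g x)) ↔
        ∀ x : B, Bornology.IsBounded (Set.range fun g : G => α g x)) := by
  have hcomp : ∀ (g h : G) (x : B), α g (α h x) = α (g * h) x := by
    intro g h x
    rw [hmul g h]
    rfl
  -- bounded orbit transfer
  have htrans : (∃ x : B, Bornology.IsBounded (Set.range fun g : G => α g x)) →
      ∀ y : B, Bornology.IsBounded (Set.range fun g : G => α g y) := by
    rintro ⟨x, hx⟩ y
    rw [Metric.isBounded_iff] at hx ⊢
    obtain ⟨C, hC⟩ := hx
    refine ⟨C + 2 * dist y x, ?_⟩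
    rintro _ ⟨g, rfl⟩ _ ⟨h, rfl⟩
    have h1 : dist (α g y) (α g x) = dist y x := (α g).dist_map y x
    have h2 : dist (α h x) (α h y) = dist x y := (α h).dist_map x y
    have h3 : dist (α g x) (α h x) ≤ C :=
      hC (Set.mem_range_self g) (Set.mem_range_self h)
    calc dist (α g y) (α h y)
        ≤ dist (α g y) (α g x) + dist (α g x) (α h x) + dist (α h x) (α h y) :=
          dist_triangle4 _ _ _ _
      _ ≤ dist y x + C + dist x y := by rw [h1, h2]; gcongr
      _ = C + 2 * dist y x := by rw [dist_comm x y]; ring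
  constructor
  · constructor
    · rintro ⟨x, hx⟩
      refine ⟨x, ?_⟩
      have : (Set.range fun g : G => α g x) ⊆ {x} := by
        rintro _ ⟨g, rfl⟩
        simp [hx g]
      exact Bornology.IsBounded.subset (Bornology.isBounded_singleton) this
    · rintro ⟨x, hx⟩
      set S := Set.range fun g : G => α g x with hSdef
      have hne : S.Nonempty := Set.range_nonempty _
      obtain ⟨c, hc1, hc2⟩ := exists_center hne hx
      refine ⟨c, fun g => ?_⟩
      -- α g c is also a center
      have hgc : rad S (α g c) ≤ radInf S := by
        refine le_trans (rad_le hne fun s hs => ?_) hc1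
        obtain ⟨h, rfl⟩ := hs
        have h1 : α g (α (g⁻¹ * h) x) = α h x := by
          rw [hcomp]; congr 1; group
        calc dist (α g c) (α h x) = dist (α g c) (α g (α (g⁻¹ * h) x)) := by rw [h1]
          _ = dist c (α (g⁻¹ * h) x) := (α g).dist_map _ _
          _ ≤ rad S c := dist_le_rad hx ⟨g⁻¹ * h, rfl⟩
      exact hc2 _ hgc
  · exact ⟨fun h x => htrans h x, fun h => ⟨0, h 0⟩⟩
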